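/- arXiv:2202.00190 — 2 statements merged into one kernel-verified Lean document; each statement's English description precedes it below -/
import Mathlib

section
/- (Lemma 4, upper-end truncation step) In the setup below, for every S ⊆ {1,…,n} with |S| ≤ k: (1/2)·(1−ε)^{k−1}·(1−Δ/ε) · v₁(S) ≤ u(S) ≤ 2·(1−ε)^{−(k−1)}·(1−Δ/ε)^{−1} · v₁(S). -/
open MeasureTheory ProbabilityTheory

/-- For a subset `S` of coordinates, `mask S x` is the vector agreeing with `x` on `S`
and equal to `0` outside `S`. -/
def mask {n : ℕ} (S : Finset (Fin n)) (x : Fin n → ℝ) : Fin n → ℝ :=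
  fun i => if i ∈ S then x i else 0

section helpers

lemma single_nonneg' {n : ℕ} (i : Fin n) (r : ℝ) (hr : 0 ≤ r) :
    (0 : Fin n → ℝ) ≤ Pi.single i r := by
  intro j
  rw [Pi.single_apply]
  split <;> simp [hr]

lemma subadd_sum_single {n : ℕ} (f : (Fin n → ℝ) → ℝ)
    (hf_subadd : ∀ x y : Fin n → ℝ, 0 ≤ x → 0 ≤ y → f (x + y) ≤ f x + f y)
    (T : Finset (Fin n)) (a : Fin n → ℝ) (ha : 0 ≤ a) (b : Fin n → ℝ) (hb : ∀ i, 0 ≤ b i) :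
    f (a + ∑ i ∈ T, Pi.single i (b i)) ≤ f a + ∑ i ∈ T, f (Pi.single i (b i)) := by
  classical
  induction T using Finset.cons_induction with
  | empty => simp
  | cons i T hi ih =>
    have hsum : (0 : Fin n → ℝ) ≤ ∑ j ∈ T, Pi.single j (b j) :=
      Finset.sum_nonneg fun j _ => single_nonneg' j (b j) (hb j)
    have hstep : f (a + ∑ j ∈ T, Pi.single j (b j) + Pi.single i (b i))
        ≤ f (a + ∑ j ∈ T, Pi.single j (b j)) + f (Pi.single i (b i)) :=
      hf_subadd _ _ (le_trans ha (by simpa using add_le_add_left hsum a)) (single_nonneg' i (b i) (hb i))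
    rw [Finset.sum_cons, Finset.sum_cons]
    have heq : a + (Pi.single i (b i) + ∑ j ∈ T, Pi.single j (b j))
        = a + ∑ j ∈ T, Pi.single j (b j) + Pi.single i (b i) := by ring
    rw [heq]
    refine le_trans hstep ?_
    linarith [ih]

lemma sum_first_exceed_le {n : ℕ} (S : Finset (Fin n)) (P : Fin n → Prop) [DecidablePred P]
    (v : Fin n → ℝ) (M : ℝ) (hM : 0 ≤ M)
    (hv : ∀ i ∈ S, P i → v i ≤ M) :
    ∑ i ∈ S, (if P i ∧ (∀ j ∈ S, j < i → ¬ P j) then v i else 0) ≤ M := by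
  classical
  by_cases hex : ∃ i ∈ S, P i
  · obtain ⟨i0, hi0S, hi0P⟩ := hex
    set F := S.filter P with hF
    have hFne : F.Nonempty := ⟨i0, Finset.mem_filter.2 ⟨hi0S, hi0P⟩⟩
    set m := F.min' hFne with hm
    have hmF : m ∈ F := F.min'_mem hFne
    have hmS : m ∈ S := (Finset.mem_filter.1 hmF).1
    have hmP : P m := (Finset.mem_filter.1 hmF).2
    rw [Finset.sum_eq_single_of_mem m hmS]
    · split
      · exact hv m hmS hmP
      · exact hM
    · intro j hjS hjm
      rw [if_neg]
      rintro ⟨hjP, hall⟩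
      have hle : m ≤ j := F.min'_le j (Finset.mem_filter.2 ⟨hjS, hjP⟩)
      exact hall m hmS (lt_of_le_of_ne hle hjm.symm) hmP
  · push_neg at hex
    rw [Finset.sum_eq_zero]
    · exact hM
    · intro i hi
      rw [if_neg]
      rintro ⟨hP, -⟩
      exact hex i hi hP

end helpers

/-- Lemma 4 (upper-end truncation step): with `X̂_i = X_i·1{X_i ≤ τ_i} + c_i·1{X_i > τ_i}`
and `v₁(S) = E[f(X̂_S)]`, for every `S` with `|S| ≤ k`:
`(1/2)(1−ε)^{k−1}(1−Δ/ε)·v₁(S) ≤ u(S) ≤ 2(1−ε)^{−(k−1)}(1−Δ/ε)^{−1}·v₁(S)`. -/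
theorem upper_end_truncation_bounds
    {Ωs : Type*} [MeasurableSpace Ωs] (μ : Measure Ωs) [IsProbabilityMeasure μ]
    {n : ℕ} (hn : 1 ≤ n)
    (X : Fin n → Ωs → ℝ)
    (hX_meas : ∀ i, Measurable (X i))
    (hX_nonneg : ∀ i ω, 0 ≤ X i ω)
    (hX_indep : iIndepFun X μ)
    (f : (Fin n → ℝ) → ℝ)
    (hf_meas : Measurable f)
    (hf_nonneg : ∀ x : Fin n → ℝ, 0 ≤ x → 0 ≤ f x)
    (hf_mono : ∀ x y : Fin n → ℝ, 0 ≤ x → x ≤ y → f x ≤ f y)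
    (hf_subadd : ∀ x y : Fin n → ℝ, 0 ≤ x → 0 ≤ y → f (x + y) ≤ f x + f y)
    (k : ℕ) (hk : 1 ≤ k)
    (ε Δ : ℝ) (hε : ε ∈ Set.Ioo (0 : ℝ) 1) (hΔ : Δ ∈ Set.Ico (0 : ℝ) ε)
    (τ : Fin n → ℝ) (hτ : ∀ i, 0 ≤ τ i)
    (hquant : ∀ i, 1 - ε ≤ (μ {ω | X i ω ≤ τ i}).toReal ∧
      (μ {ω | X i ω ≤ τ i}).toReal ≤ 1 - ε + Δ)
    (H : Fin n → ℝ)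
    (hH : ∀ i, H i = (∫ ω in {ω | τ i < X i ω}, f (Pi.single i (X i ω)) ∂μ) /
      (μ {ω | τ i < X i ω}).toReal)
    (hH_int : ∀ i, Integrable (fun ω => f (Pi.single i (X i ω))) μ)
    (cst : Fin n → ℝ) (hcst : ∀ i, τ i < cst i)
    (hcstH : ∀ i, f (Pi.single i (cst i)) = H i)
    (Xhat : Fin n → Ωs → ℝ)
    (hXhat : ∀ i ω, Xhat i ω = if X i ω ≤ τ i then X i ω else cst i)
    (u v₁ : Finset (Fin n) → ℝ)
    (hu : ∀ S, u S = ∫ ω, f (mask S (fun i => X i ω)) ∂μ)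
    (hv₁ : ∀ S, v₁ S = ∫ ω, f (mask S (fun i => Xhat i ω)) ∂μ)
    (hu_int : ∀ S : Finset (Fin n),
      Integrable (fun ω => f (mask S (fun i => X i ω))) μ)
    (hv₁_int : ∀ S : Finset (Fin n),
      Integrable (fun ω => f (mask S (fun i => Xhat i ω))) μ) :
    ∀ S : Finset (Fin n), S.card ≤ k →
      (1 / 2) * (1 - ε) ^ (k - 1) * (1 - Δ / ε) * v₁ S ≤ u S ∧
      u S ≤ 2 * ((1 - ε) ^ (k - 1))⁻¹ * (1 - Δ / ε)⁻¹ * v₁ S := by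
  classical
  intro S hSk
  obtain ⟨hε0, hε1⟩ := hε
  obtain ⟨hΔ0, hΔε⟩ := hΔ
  -- basic events and probabilities
  set A : Fin n → Set Ωs := fun i => {ω | X i ω ≤ τ i} with hA
  have hA_meas : ∀ i, MeasurableSet (A i) := fun i =>
    measurableSet_le (hX_meas i) measurable_const
  have hAc : ∀ i, {ω | τ i < X i ω} = (A i)ᶜ := by
    intro i; ext ω; simp [hA, not_le]
  set q : Fin n → ℝ := fun i => (μ (A i)).toReal with hqdef
  have hq_ge : ∀ i, 1 - ε ≤ q i := fun i => (hquant i).1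
  have hq_le : ∀ i, q i ≤ 1 - ε + Δ := fun i => (hquant i).2
  have hp : ∀ i, (μ ((A i)ᶜ)).toReal = 1 - q i := by
    intro i
    rw [measure_compl (hA_meas i) (measure_ne_top μ _), measure_univ,
      ENNReal.toReal_sub_of_le prob_le_one ENNReal.one_ne_top, ENNReal.toReal_one]
  have hp_pos : ∀ i, 0 < 1 - q i := by
    intro i; have := hq_le i; linarith
  -- nonnegativity of the processes
  have hXhat_nonneg : ∀ i ω, 0 ≤ Xhat i ω := by
    intro i ω
    rw [hXhat]
    split
    · exact hX_nonneg i ω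
    · exact le_of_lt (lt_of_le_of_lt (hτ i) (hcst i))
  set Xbar : Fin n → Ωs → ℝ := fun i ω => if X i ω ≤ τ i then X i ω else 0 with hXbardef
  have hXbar_nonneg : ∀ i ω, 0 ≤ Xbar i ω := by
    intro i ω
    simp only [hXbardef]
    split
    · exact hX_nonneg i ω
    · exact le_rfl
  have hXbar_meas : ∀ i, Measurable (Xbar i) := fun i =>
    Measurable.ite (hA_meas i) (hX_meas i) measurable_const
  -- generic facts about masks
  have hmask_nonneg : ∀ (Y : Fin n → ℝ), (∀ i, 0 ≤ Y i) → (0 : Fin n → ℝ) ≤ mask S Y := by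
    intro Y hY j
    simp only [mask]
    split
    · exact hY j
    · exact le_rfl
  have hmask_mono : ∀ (Y Z : Fin n → ℝ), (∀ i, Y i ≤ Z i) → mask S Y ≤ mask S Z := by
    intro Y Z hYZ j
    simp only [mask]
    split
    · exact hYZ j
    · exact le_rfl
  have hmask_meas : ∀ (Z : Fin n → Ωs → ℝ), (∀ i, Measurable (Z i)) →
      Measurable (fun ω => f (mask S (fun i => Z i ω))) := by
    intro Z hZ
    refine hf_meas.comp (measurable_pi_lambda _ fun j => ?_)
    by_cases hj : j ∈ S
    · simpa [mask, hj] using hZ j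
    · simpa [mask, hj] using measurable_const
  -- ψ functions
  set ψX : Fin n → ℝ → ℝ := fun i r => if τ i < r then f (Pi.single i r) else 0 with hψXdef
  set ψC : Fin n → ℝ → ℝ := fun i r => if τ i < r then f (Pi.single i (cst i)) else 0 with hψCdef
  have hsingle_meas : ∀ i : Fin n, Measurable (fun r : ℝ => (Pi.single i r : Fin n → ℝ)) := by
    intro i
    refine measurable_pi_lambda _ fun j => ?_
    by_cases hj : j = i
    · simpa [Pi.single_apply, hj] using measurable_id'
    · simpa [Pi.single_apply, hj] using measurable_const
  have hψX_meas : ∀ i, Measurable (ψX i) := by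
    intro i
    exact Measurable.ite measurableSet_Ioi (hf_meas.comp (hsingle_meas i)) measurable_const
  have hψC_meas : ∀ i, Measurable (ψC i) := by
    intro i
    exact Measurable.ite measurableSet_Ioi measurable_const measurable_const
  have hψX_nonneg : ∀ i r, 0 ≤ ψX i r := by
    intro i r
    simp only [hψXdef]
    split
    · rename_i h
      exact hf_nonneg _ (single_nonneg' i r (le_trans (hτ i) (le_of_lt h)))
    · exact le_rfl
  have hψC_nonneg : ∀ i r, 0 ≤ ψC i r := by
    intro i r
    simp only [hψCdef]
    split
    · exact hf_nonneg _ (single_nonneg' i (cst i) (le_of_lt (lt_of_le_of_lt (hτ i) (hcst i))))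
    · exact le_rfl
  have hψX_zero : ∀ i r, ¬ τ i < r → ψX i r = 0 := by
    intro i r h; simp only [hψXdef, if_neg h]
  have hψC_zero : ∀ i r, ¬ τ i < r → ψC i r = 0 := by
    intro i r h; simp only [hψCdef, if_neg h]
  have hψX_int : ∀ i, Integrable (fun ω => ψX i (X i ω)) μ := by
    intro i
    refine (hH_int i).mono' (((hψX_meas i).comp (hX_meas i)).aestronglyMeasurable) ?_
    refine ae_of_all _ fun ω => ?_
    rw [Real.norm_eq_abs, abs_of_nonneg (hψX_nonneg i _)]
    simp only [hψXdef]
    split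
    · exact le_rfl
    · exact hf_nonneg _ (single_nonneg' i _ (hX_nonneg i ω))
  have hψC_indicator : ∀ i, (fun ω => ψC i (X i ω))
      = ((A i)ᶜ).indicator (fun _ => f (Pi.single i (cst i))) := by
    intro i
    funext ω
    by_cases h : τ i < X i ω
    · rw [Set.indicator_of_mem (by simp [hA, not_le.2 h])]
      simp only [hψCdef, if_pos h]
    · rw [Set.indicator_of_notMem (by simp [hA]; exact not_lt.1 h)]
      simp only [hψCdef, if_neg h]
  have hψC_int : ∀ i, Integrable (fun ω => ψC i (X i ω)) μ := by
    intro i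
    rw [hψC_indicator i]
    exact (integrable_const _).indicator (hA_meas i).compl
  -- key independence lemma
  have key : ∀ (ψ : Fin n → ℝ → ℝ) (G : Ωs → ℝ),
      (∀ i, Measurable (ψ i)) →
      (∀ i r, 0 ≤ ψ i r) →
      (∀ i r, ¬ τ i < r → ψ i r = 0) →
      (∀ i, Integrable (fun ω => ψ i (X i ω)) μ) →
      Integrable G μ → (∀ ω, 0 ≤ G ω) →
      (∀ i ∈ S, ∀ ω, τ i < X i ω → ψ i (X i ω) ≤ G ω) →
      (1 - ε) ^ (k - 1) * ∑ i ∈ S, (∫ ω, ψ i (X i ω) ∂μ) ≤ ∫ ω, G ω ∂μ := by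
    intro ψ G hψm hψ0 hψz hψint hGint hG0 hbound
    set T : Fin n → Finset (Fin n) := fun i => S.filter (fun j => j < i) with hTdef
    set C : Fin n → Set Ωs := fun i => ⋂ j ∈ T i, A j with hCdef
    have hC_meas : ∀ i, MeasurableSet (C i) :=
      fun i => MeasurableSet.biInter (Set.to_countable _) fun j _ => hA_meas j
    have hCmem : ∀ i ω, ω ∈ C i ↔ ∀ j ∈ T i, X j ω ≤ τ j := by
      intro i ω
      simp [hCdef, hA, Set.mem_iInter]
    have hstepA : (∑ i ∈ S, ∫ ω, (C i).indicator (fun ω' => ψ i (X i ω')) ω ∂μ)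
        ≤ ∫ ω, G ω ∂μ := by
      have hint : ∀ i ∈ S, Integrable ((C i).indicator fun ω => ψ i (X i ω)) μ :=
        fun i _ => (hψint i).indicator (hC_meas i)
      rw [← integral_finset_sum S hint]
      refine integral_mono (integrable_finset_sum S hint) hGint ?_
      intro ω
      have hterm : ∀ i, (C i).indicator (fun ω' => ψ i (X i ω')) ω
          = if (τ i < X i ω ∧ ∀ j ∈ S, j < i → ¬ τ j < X j ω) then ψ i (X i ω) else 0 := by
        intro i
        by_cases hτi : τ i < X i ω
        · by_cases hωC : ω ∈ C i
          · rw [Set.indicator_of_mem hωC, if_pos ⟨hτi, fun j hj hji =>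
              not_lt.2 ((hCmem i ω).1 hωC j (Finset.mem_filter.2 ⟨hj, hji⟩))⟩]
          · rw [Set.indicator_of_notMem hωC, if_neg]
            rintro ⟨-, hall⟩
            exact hωC ((hCmem i ω).2 fun j hjT =>
              not_lt.1 (hall j (Finset.mem_filter.1 hjT).1 (Finset.mem_filter.1 hjT).2))
        · rw [Set.indicator_apply]
          rw [hψz i _ hτi]
          simp
      have hmain := sum_first_exceed_le S (fun i => τ i < X i ω)
        (fun i => ψ i (X i ω)) (G ω) (hG0 ω) (fun i hi hP => hbound i hi ω hP)
      calc (∑ i ∈ S, ((C i).indicator fun ω' => ψ i (X i ω')) ω)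
          = ∑ i ∈ S, (if (τ i < X i ω ∧ ∀ j ∈ S, j < i → ¬ τ j < X j ω)
              then ψ i (X i ω) else 0) := Finset.sum_congr rfl fun i _ => hterm i
        _ ≤ G ω := hmain
    have hstepB : ∀ i ∈ S, (1 - ε) ^ (k - 1) * ∫ ω, ψ i (X i ω) ∂μ
        ≤ ∫ ω, (C i).indicator (fun ω' => ψ i (X i ω')) ω ∂μ := by
      intro i hiS
      have hiT : i ∉ T i := by simp [hTdef]
      have hdisj : Disjoint ({i} : Finset (Fin n)) (T i) := by
        simp [Finset.disjoint_left, hiT]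
      have hind0 := hX_indep.indepFun_finset {i} (T i) hdisj hX_meas
      set φ1 : (↥({i} : Finset (Fin n)) → ℝ) → ℝ :=
        fun y => ψ i (y ⟨i, Finset.mem_singleton_self i⟩) with hφ1def
      set φ2 : (↥(T i) → ℝ) → ℝ :=
        Set.indicator {y | ∀ j : ↥(T i), y j ≤ τ (j : Fin n)}
          (fun _ => (1:ℝ)) with hφ2def
      have hφ1m : Measurable φ1 := (hψm i).comp (measurable_pi_apply _)
      have hset2 : MeasurableSet {y : ↥(T i) → ℝ | ∀ j, y j ≤ τ (j : Fin n)} := by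
        have hseteq : {y : ↥(T i) → ℝ | ∀ j, y j ≤ τ (j : Fin n)}
            = ⋂ j, {y : ↥(T i) → ℝ | y j ≤ τ (j : Fin n)} := by
          ext y; simp [Set.mem_iInter]
        rw [hseteq]
        exact MeasurableSet.iInter fun j =>
          measurableSet_le (measurable_pi_apply j) measurable_const
      have hφ2m : Measurable φ2 := measurable_const.indicator hset2
      have hind := hind0.comp hφ1m hφ2m
      have h1 : (φ1 ∘ fun a (j : ↥({i} : Finset (Fin n))) => X j a) = fun ω => ψ i (X i ω) := rfl
      have hmemiff : ∀ ω, ((fun j : ↥(T i) => X (j : Fin n) ω)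
          ∈ {y : ↥(T i) → ℝ | ∀ j, y j ≤ τ (j : Fin n)}) ↔ ω ∈ C i := by
        intro ω
        simp only [Set.mem_setOf_eq, hCmem i ω]
        constructor
        · intro h j hj; exact h ⟨j, hj⟩
        · intro h j; exact h j j.2
      have h2 : (φ2 ∘ fun a (j : ↥(T i)) => X (j : Fin n) a)
          = (C i).indicator (fun _ => (1:ℝ)) := by
        funext ω
        by_cases hω : ω ∈ C i
        · rw [Function.comp_apply, hφ2def, Set.indicator_of_mem ((hmemiff ω).2 hω),
            Set.indicator_of_mem hω]
        · rw [Function.comp_apply, hφ2def,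
            Set.indicator_of_notMem (fun h => hω ((hmemiff ω).1 h)),
            Set.indicator_of_notMem hω]
      rw [h1, h2] at hind
      have hF1m : AEStronglyMeasurable (fun ω => ψ i (X i ω)) μ :=
        ((hψm i).comp (hX_meas i)).aestronglyMeasurable
      have hF2m : AEStronglyMeasurable ((C i).indicator fun _ => (1:ℝ)) μ :=
        (measurable_const.indicator (hC_meas i)).aestronglyMeasurable
      have hmul := IndepFun.integral_mul_eq_mul_integral (μ := μ) (X := fun ω => ψ i (X i ω))
        (Y := (C i).indicator fun _ => (1:ℝ)) hind hF1m hF2m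
      have hprod : ((fun ω => ψ i (X i ω)) * (C i).indicator fun _ => (1:ℝ))
          = (C i).indicator (fun ω => ψ i (X i ω)) := by
        funext ω
        by_cases hω : ω ∈ C i <;>
          simp [Set.indicator_of_mem, Set.indicator_of_notMem, hω]
      rw [hprod] at hmul
      have hind1 : ∫ ω, (C i).indicator (fun _ => (1:ℝ)) ω ∂μ = (μ (C i)).toReal := by
        rw [integral_indicator_const (1:ℝ) (hC_meas i)]
        simp [measureReal_def]
      have hμC : (μ (C i)).toReal = ∏ j ∈ T i, q j := by
        have hbi := hX_indep.meas_biInter (S := T i) (s := fun j => A j)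
          (fun j _ => ⟨Set.Iic (τ j), measurableSet_Iic, rfl⟩)
        simp only [hCdef]
        rw [hbi, ENNReal.toReal_prod]
      have hprodge : (1 - ε) ^ (k - 1) ≤ ∏ j ∈ T i, q j := by
        have h1' : ((1 : ℝ) - ε) ^ (T i).card ≤ ∏ j ∈ T i, q j := by
          rw [← Finset.prod_const]
          exact Finset.prod_le_prod (fun j _ => by linarith) (fun j _ => hq_ge j)
        have hcard : (T i).card ≤ k - 1 := by
          have hsub : T i ⊆ S.erase i := by
            intro j hj
            rw [Finset.mem_erase]
            exact ⟨ne_of_lt (Finset.mem_filter.1 hj).2, (Finset.mem_filter.1 hj).1⟩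
          calc (T i).card ≤ (S.erase i).card := Finset.card_le_card hsub
            _ = S.card - 1 := Finset.card_erase_of_mem hiS
            _ ≤ k - 1 := Nat.sub_le_sub_right hSk 1
        calc (1 - ε) ^ (k - 1) ≤ (1 - ε) ^ (T i).card :=
            pow_le_pow_of_le_one (by linarith) (by linarith) hcard
          _ ≤ ∏ j ∈ T i, q j := h1'
      have hψnn : 0 ≤ ∫ ω, ψ i (X i ω) ∂μ := integral_nonneg fun ω => hψ0 i _
      calc (1 - ε) ^ (k - 1) * ∫ ω, ψ i (X i ω) ∂μ
          ≤ (∏ j ∈ T i, q j) * ∫ ω, ψ i (X i ω) ∂μ :=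
            mul_le_mul_of_nonneg_right hprodge hψnn
        _ = ∫ ω, (C i).indicator (fun ω' => ψ i (X i ω')) ω ∂μ := by
            rw [hmul, hind1, hμC]; ring
    calc (1 - ε) ^ (k - 1) * ∑ i ∈ S, (∫ ω, ψ i (X i ω) ∂μ)
        = ∑ i ∈ S, (1 - ε) ^ (k - 1) * ∫ ω, ψ i (X i ω) ∂μ := Finset.mul_sum _ _ _
      _ ≤ ∑ i ∈ S, ∫ ω, (C i).indicator (fun ω' => ψ i (X i ω')) ω ∂μ :=
          Finset.sum_le_sum hstepB
      _ ≤ ∫ ω, G ω ∂μ := hstepA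
  -- decomposition identities
  have hmaskbar_eq : ∀ ω, mask S (fun i => X i ω)
      = mask S (fun i => Xbar i ω)
        + ∑ i ∈ S.filter (fun i => τ i < X i ω), Pi.single i (X i ω) := by
    intro ω
    funext j
    have hsum : (∑ i ∈ S.filter (fun i => τ i < X i ω), Pi.single i (X i ω)) j
        = if j ∈ S.filter (fun i => τ i < X i ω) then X j ω else 0 := by
      rw [Finset.sum_apply]
      simp only [Pi.single_apply]
      exact Finset.sum_ite_eq _ j _
    simp only [Pi.add_apply, hsum, mask, Finset.mem_filter]
    by_cases hjS : j ∈ S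
    · by_cases hjτ : τ j < X j ω
      · have h1 : ¬ X j ω ≤ τ j := not_le.2 hjτ
        simp [hjS, hjτ, hXbardef, h1]
      · simp [hjS, hjτ, hXbardef, not_lt.1 hjτ]
    · simp [hjS]
  have hmaskhat_eq : ∀ ω, mask S (fun i => Xhat i ω)
      = mask S (fun i => Xbar i ω)
        + ∑ i ∈ S.filter (fun i => τ i < X i ω), Pi.single i (cst i) := by
    intro ω
    funext j
    have hsum : (∑ i ∈ S.filter (fun i => τ i < X i ω), Pi.single i (cst i)) j
        = if j ∈ S.filter (fun i => τ i < X i ω) then cst j else 0 := by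
      rw [Finset.sum_apply]
      simp only [Pi.single_apply]
      exact Finset.sum_ite_eq _ j _
    simp only [Pi.add_apply, hsum, mask, Finset.mem_filter]
    by_cases hjS : j ∈ S
    · by_cases hjτ : τ j < X j ω
      · have h1 : ¬ X j ω ≤ τ j := not_le.2 hjτ
        simp [hjS, hjτ, hXbardef, h1, hXhat]
      · simp [hjS, hjτ, hXbardef, not_lt.1 hjτ, hXhat]
    · simp [hjS]
  -- the truncated integral W
  have hW_meas : Measurable (fun ω => f (mask S (fun i => Xbar i ω))) :=
    hmask_meas Xbar hXbar_meas
  have hbarleX : ∀ ω i, Xbar i ω ≤ X i ω := by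
    intro ω i
    simp only [hXbardef]
    split
    · exact le_rfl
    · exact hX_nonneg i ω
  have hbarleXhat : ∀ ω i, Xbar i ω ≤ Xhat i ω := by
    intro ω i
    rw [hXhat]
    simp only [hXbardef]
    split
    · exact le_rfl
    · exact le_of_lt (lt_of_le_of_lt (hτ i) (hcst i))
  have hWptw_u : ∀ ω, f (mask S (fun i => Xbar i ω)) ≤ f (mask S (fun i => X i ω)) :=
    fun ω => hf_mono _ _ (hmask_nonneg _ (fun i => hXbar_nonneg i ω))
      (hmask_mono _ _ (hbarleX ω))
  have hWptw_v : ∀ ω, f (mask S (fun i => Xbar i ω)) ≤ f (mask S (fun i => Xhat i ω)) :=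
    fun ω => hf_mono _ _ (hmask_nonneg _ (fun i => hXbar_nonneg i ω))
      (hmask_mono _ _ (hbarleXhat ω))
  have hW_nonneg : ∀ ω, 0 ≤ f (mask S (fun i => Xbar i ω)) :=
    fun ω => hf_nonneg _ (hmask_nonneg _ (fun i => hXbar_nonneg i ω))
  have hW_int : Integrable (fun ω => f (mask S (fun i => Xbar i ω))) μ := by
    refine (hu_int S).mono' hW_meas.aestronglyMeasurable (ae_of_all _ fun ω => ?_)
    rw [Real.norm_eq_abs, abs_of_nonneg (hW_nonneg ω)]
    exact hWptw_u ω
  set W : ℝ := ∫ ω, f (mask S (fun i => Xbar i ω)) ∂μ with hWdef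
  have hWu : W ≤ u S := by
    rw [hu]
    exact integral_mono hW_int (hu_int S) hWptw_u
  have hWv : W ≤ v₁ S := by
    rw [hv₁]
    exact integral_mono hW_int (hv₁_int S) hWptw_v
  -- subadditive upper bounds
  have hU : u S ≤ W + ∑ i ∈ S, ∫ ω, ψX i (X i ω) ∂μ := by
    have hptw : ∀ ω, f (mask S (fun i => X i ω))
        ≤ f (mask S (fun i => Xbar i ω)) + ∑ i ∈ S, ψX i (X i ω) := by
      intro ω
      rw [hmaskbar_eq ω]
      refine le_trans (subadd_sum_single f hf_subadd _ _
        (hmask_nonneg _ (fun i => hXbar_nonneg i ω)) _ (fun i => hX_nonneg i ω)) ?_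
      have heq : (∑ i ∈ S.filter (fun i => τ i < X i ω), f (Pi.single i (X i ω)))
          = ∑ i ∈ S, ψX i (X i ω) := by
        rw [Finset.sum_filter]
      linarith [heq.le, heq.ge]
    rw [hu]
    calc ∫ ω, f (mask S (fun i => X i ω)) ∂μ
        ≤ ∫ ω, (f (mask S (fun i => Xbar i ω)) + ∑ i ∈ S, ψX i (X i ω)) ∂μ :=
          integral_mono (hu_int S)
            (hW_int.add (integrable_finset_sum S (fun i _ => hψX_int i))) hptw
      _ = W + ∑ i ∈ S, ∫ ω, ψX i (X i ω) ∂μ := by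
          rw [integral_add hW_int (integrable_finset_sum S (fun i _ => hψX_int i)),
            integral_finset_sum S (fun i _ => hψX_int i)]
  have hV : v₁ S ≤ W + ∑ i ∈ S, ∫ ω, ψC i (X i ω) ∂μ := by
    have hptw : ∀ ω, f (mask S (fun i => Xhat i ω))
        ≤ f (mask S (fun i => Xbar i ω)) + ∑ i ∈ S, ψC i (X i ω) := by
      intro ω
      rw [hmaskhat_eq ω]
      refine le_trans (subadd_sum_single f hf_subadd _ _
        (hmask_nonneg _ (fun i => hXbar_nonneg i ω)) _
        (fun i => le_of_lt (lt_of_le_of_lt (hτ i) (hcst i)))) ?_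
      have heq : (∑ i ∈ S.filter (fun i => τ i < X i ω), f (Pi.single i (cst i)))
          = ∑ i ∈ S, ψC i (X i ω) := by
        rw [Finset.sum_filter]
      linarith [heq.le, heq.ge]
    rw [hv₁]
    calc ∫ ω, f (mask S (fun i => Xhat i ω)) ∂μ
        ≤ ∫ ω, (f (mask S (fun i => Xbar i ω)) + ∑ i ∈ S, ψC i (X i ω)) ∂μ :=
          integral_mono (hv₁_int S)
            (hW_int.add (integrable_finset_sum S (fun i _ => hψC_int i))) hptw
      _ = W + ∑ i ∈ S, ∫ ω, ψC i (X i ω) ∂μ := by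
          rw [integral_add hW_int (integrable_finset_sum S (fun i _ => hψC_int i)),
            integral_finset_sum S (fun i _ => hψC_int i)]
  -- the two ψ integrals agree
  have hψX_indicator : ∀ i, (fun ω => ψX i (X i ω))
      = ((A i)ᶜ).indicator (fun ω => f (Pi.single i (X i ω))) := by
    intro i
    funext ω
    by_cases h : τ i < X i ω
    · rw [Set.indicator_of_mem (by simp [hA, not_le.2 h] : ω ∈ (A i)ᶜ)]
      simp only [hψXdef, if_pos h]
    · rw [Set.indicator_of_notMem (by simp [hA]; exact not_lt.1 h)]
      simp only [hψXdef, if_neg h]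
  have hIeq : ∀ i, (∫ ω, ψC i (X i ω) ∂μ) = ∫ ω, ψX i (X i ω) ∂μ := by
    intro i
    have hne : (1 : ℝ) - q i ≠ 0 := ne_of_gt (hp_pos i)
    have hX' : (∫ ω, ψX i (X i ω) ∂μ)
        = ∫ ω in (A i)ᶜ, f (Pi.single i (X i ω)) ∂μ := by
      rw [hψX_indicator i, integral_indicator (hA_meas i).compl]
    have hC' : (∫ ω, ψC i (X i ω) ∂μ)
        = (μ ((A i)ᶜ)).toReal * f (Pi.single i (cst i)) := by
      rw [hψC_indicator i, integral_indicator_const _ (hA_meas i).compl, smul_eq_mul, measureReal_def]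
    have hHi : f (Pi.single i (cst i))
        = (∫ ω in (A i)ᶜ, f (Pi.single i (X i ω)) ∂μ) / (1 - q i) := by
      rw [hcstH i, hH i, hAc i, hp i]
    rw [hC', hX', hHi, hp i]
    field_simp
  -- applying the key lemma
  have hu_nonneg_ptw : ∀ ω, 0 ≤ f (mask S (fun i => X i ω)) :=
    fun ω => hf_nonneg _ (hmask_nonneg _ (fun i => hX_nonneg i ω))
  have hv_nonneg_ptw : ∀ ω, 0 ≤ f (mask S (fun i => Xhat i ω)) :=
    fun ω => hf_nonneg _ (hmask_nonneg _ (fun i => hXhat_nonneg i ω))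
  have hsingle_le_maskX : ∀ i ∈ S, ∀ ω, τ i < X i ω →
      ψX i (X i ω) ≤ f (mask S (fun i' => X i' ω)) := by
    intro i hiS ω hτi
    have hle : Pi.single i (X i ω) ≤ mask S (fun i' => X i' ω) := by
      intro j
      rw [Pi.single_apply]
      by_cases hj : j = i
      · subst hj
        simp [mask, hiS]
      · rw [if_neg hj]
        exact hmask_nonneg _ (fun i' => hX_nonneg i' ω) j
    have heq : ψX i (X i ω) = f (Pi.single i (X i ω)) := by
      simp only [hψXdef, if_pos hτi]
    rw [heq]
    exact hf_mono _ _ (single_nonneg' i _ (hX_nonneg i ω)) hle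
  have hsingle_le_maskXhat : ∀ i ∈ S, ∀ ω, τ i < X i ω →
      ψC i (X i ω) ≤ f (mask S (fun i' => Xhat i' ω)) := by
    intro i hiS ω hτi
    have hle : Pi.single i (cst i) ≤ mask S (fun i' => Xhat i' ω) := by
      intro j
      rw [Pi.single_apply]
      by_cases hj : j = i
      · subst hj
        have hx : Xhat j ω = cst j := by rw [hXhat, if_neg (not_le.2 hτi)]
        simp [mask, hiS, hx]
      · rw [if_neg hj]
        exact hmask_nonneg _ (fun i' => hXhat_nonneg i' ω) j
    have heq : ψC i (X i ω) = f (Pi.single i (cst i)) := by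
      simp only [hψCdef, if_pos hτi]
    rw [heq]
    exact hf_mono _ _
      (single_nonneg' i _ (le_of_lt (lt_of_le_of_lt (hτ i) (hcst i)))) hle
  have keyU : (1 - ε) ^ (k - 1) * (∑ i ∈ S, ∫ ω, ψX i (X i ω) ∂μ) ≤ u S := by
    rw [hu]
    exact key ψX (fun ω => f (mask S (fun i => X i ω))) hψX_meas hψX_nonneg hψX_zero
      hψX_int (hu_int S) hu_nonneg_ptw hsingle_le_maskX
  have keyV : (1 - ε) ^ (k - 1) * (∑ i ∈ S, ∫ ω, ψC i (X i ω) ∂μ) ≤ v₁ S := by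
    rw [hv₁]
    exact key ψC (fun ω => f (mask S (fun i => Xhat i ω))) hψC_meas hψC_nonneg hψC_zero
      hψC_int (hv₁_int S) hv_nonneg_ptw hsingle_le_maskXhat
  -- final algebra
  set SI : ℝ := ∑ i ∈ S, ∫ ω, ψX i (X i ω) ∂μ with hSIdef
  have hSC : (∑ i ∈ S, ∫ ω, ψC i (X i ω) ∂μ) = SI :=
    Finset.sum_congr rfl fun i _ => hIeq i
  rw [hSC] at keyV hV
  have hSI0 : 0 ≤ SI :=
    Finset.sum_nonneg fun i _ => integral_nonneg fun ω => hψX_nonneg i _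
  have hu0 : 0 ≤ u S := by
    rw [hu]; exact integral_nonneg hu_nonneg_ptw
  have hv0 : 0 ≤ v₁ S := by
    rw [hv₁]; exact integral_nonneg hv_nonneg_ptw
  set P : ℝ := (1 - ε) ^ (k - 1) with hPdef
  have hP0 : 0 < P := pow_pos (by linarith) _
  have hP1 : P ≤ 1 := pow_le_one₀ (by linarith) (by linarith)
  set D : ℝ := 1 - Δ / ε with hDdef
  have hD0 : 0 < D := by
    have hlt : Δ / ε < 1 := (div_lt_one hε0).2 hΔε
    simp only [hDdef]; linarith
  have hD1 : D ≤ 1 := by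
    have hge : 0 ≤ Δ / ε := div_nonneg hΔ0 (le_of_lt hε0)
    simp only [hDdef]; linarith
  constructor
  · -- lower bound
    have h1 : v₁ S ≤ u S + SI := le_trans hV (add_le_add_left hWu SI)
    have h2 := mul_le_mul_of_nonneg_left h1 hP0.le
    have h3 : P * u S ≤ u S := mul_le_of_le_one_left hu0 hP1
    have h4 := mul_le_mul_of_nonneg_right hD1 (mul_nonneg hP0.le hv0)
    have h2' : P * v₁ S ≤ P * u S + P * SI := by
      calc P * v₁ S ≤ P * (u S + SI) := h2
        _ = P * u S + P * SI := mul_add _ _ _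
    have hPv2u : P * v₁ S ≤ 2 * u S := by
      calc P * v₁ S ≤ P * u S + P * SI := h2'
        _ ≤ u S + u S := add_le_add h3 keyU
        _ = 2 * u S := by ring
    calc 1 / 2 * P * D * v₁ S = 1 / 2 * (D * (P * v₁ S)) := by ring
      _ ≤ 1 / 2 * (1 * (P * v₁ S)) := by
          have h12 : (0:ℝ) ≤ 1 / 2 := by norm_num
          exact mul_le_mul_of_nonneg_left h4 h12
      _ = 1 / 2 * (P * v₁ S) := by ring
      _ ≤ 1 / 2 * (2 * u S) := by
          have h12 : (0:ℝ) ≤ 1 / 2 := by norm_num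
          exact mul_le_mul_of_nonneg_left hPv2u h12
      _ = u S := by ring
  · -- upper bound
    have h1 : u S ≤ v₁ S + SI := le_trans hU (add_le_add_left hWv SI)
    have hPinv0 : 0 ≤ P⁻¹ := inv_nonneg.2 hP0.le
    have hPinv1 : (1 : ℝ) ≤ P⁻¹ := (one_le_inv₀ hP0).2 hP1
    have hDinv1 : (1 : ℝ) ≤ D⁻¹ := (one_le_inv₀ hD0).2 hD1
    have hSIv : SI ≤ P⁻¹ * v₁ S := by
      have h := mul_le_mul_of_nonneg_left keyV hPinv0
      rwa [← mul_assoc, inv_mul_cancel₀ hP0.ne', one_mul] at h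
    have hge1 : (1 : ℝ) ≤ P⁻¹ * D⁻¹ :=
      le_trans hPinv1 (le_mul_of_one_le_right hPinv0 hDinv1)
    have hv1le : v₁ S ≤ P⁻¹ * D⁻¹ * v₁ S := by
      calc v₁ S = 1 * v₁ S := (one_mul _).symm
        _ ≤ P⁻¹ * D⁻¹ * v₁ S := mul_le_mul_of_nonneg_right hge1 hv0
    have hPv : P⁻¹ * v₁ S ≤ P⁻¹ * D⁻¹ * v₁ S :=
      mul_le_mul_of_nonneg_right (le_mul_of_one_le_right hPinv0 hDinv1) hv0
    calc u S ≤ v₁ S + SI := h1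
      _ ≤ P⁻¹ * D⁻¹ * v₁ S + P⁻¹ * v₁ S := add_le_add hv1le hSIv
      _ ≤ P⁻¹ * D⁻¹ * v₁ S + P⁻¹ * D⁻¹ * v₁ S := add_le_add_right hPv _
      _ = 2 * P⁻¹ * D⁻¹ * v₁ S := by ring
end

section
/- Let f : ℝ₊ⁿ → [0,∞) be Borel measurable, monotone and subadditive, let τ_1,…,τ_n ≥ 0, let Z_1,…,Z_n be nonnegative random variables with ℙ(Z_i > τ_i) ≥ p for every i, for some p > 0, and let k ≥ 1. Then for every nonempty S ⊆ {1,…,n} with |S| ≤ k: 𝔼[f(Z_S)] ≥ (p/k) · f(τ_S), where τ_S ∈ ℝⁿ has i-th coordinate τ_i for i ∈ S and 0 otherwise. -/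
open MeasureTheory

lemma mask_nonneg {n : ℕ} (S : Finset (Fin n)) {x : Fin n → ℝ} (hx : ∀ i, 0 ≤ x i) :
    (0 : Fin n → ℝ) ≤ mask S x := by
  intro i
  simp only [mask, Pi.zero_apply]
  split
  · exact hx i
  · exact le_rfl

lemma f_mask_le_sum {n : ℕ} (f : (Fin n → ℝ) → ℝ)
    (hf_subadd : ∀ x y : Fin n → ℝ, 0 ≤ x → 0 ≤ y → f (x + y) ≤ f x + f y)
    {x : Fin n → ℝ} (hx : ∀ i, 0 ≤ x i) (S : Finset (Fin n)) (hS : S.Nonempty) :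
    f (mask S x) ≤ ∑ i ∈ S, f (mask {i} x) := by
  induction S using Finset.induction with
  | empty => exact absurd hS (by simp)
  | @insert a S ha ih =>
    rcases S.eq_empty_or_nonempty with rfl | hSne
    · simp
    · have hmask : mask (insert a S) x = mask {a} x + mask S x := by
        funext i
        simp only [mask, Pi.add_apply, Finset.mem_insert, Finset.mem_singleton]
        by_cases hi : i = a
        · subst hi
          simp [ha]
        · by_cases hiS : i ∈ S <;> simp [hi, hiS]
      rw [hmask, Finset.sum_insert ha]
      exact le_trans
        (hf_subadd _ _ (mask_nonneg _ hx) (mask_nonneg _ hx))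
        (add_le_add (le_refl _) (ih hSne))

/-- If `f` is monotone and subadditive on the nonnegative orthant and each nonnegative
random variable `Z i` exceeds the threshold `τ i` with probability at least `p > 0`,
then `E[f(Z_S)] ≥ (p/k) · f(τ_S)` for every nonempty `S` with `|S| ≤ k`. -/
theorem expectation_mask_ge_threshold
    {Ωs : Type*} [MeasurableSpace Ωs] (μ : Measure Ωs) [IsProbabilityMeasure μ]
    {n : ℕ} (f : (Fin n → ℝ) → ℝ)
    (hf_meas : Measurable f)
    (hf_nonneg : ∀ x : Fin n → ℝ, 0 ≤ x → 0 ≤ f x)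
    (hf_mono : ∀ x y : Fin n → ℝ, 0 ≤ x → x ≤ y → f x ≤ f y)
    (hf_subadd : ∀ x y : Fin n → ℝ, 0 ≤ x → 0 ≤ y → f (x + y) ≤ f x + f y)
    (τ : Fin n → ℝ) (hτ : ∀ i, 0 ≤ τ i)
    (Z : Fin n → Ωs → ℝ)
    (hZ_meas : ∀ i, Measurable (Z i))
    (hZ_nonneg : ∀ i ω, 0 ≤ Z i ω)
    (p : ℝ) (hp : 0 < p)
    (hZp : ∀ i, p ≤ (μ {ω | τ i < Z i ω}).toReal)
    (k : ℕ) (hk : 1 ≤ k)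
    (hint : ∀ S : Finset (Fin n),
      Integrable (fun ω => f (mask S (fun i => Z i ω))) μ) :
    ∀ S : Finset (Fin n), S.Nonempty → S.card ≤ k →
      (p / k) * f (mask S τ) ≤ ∫ ω, f (mask S (fun i => Z i ω)) ∂μ := by
  intro S hS hSk
  have hcard : (0 : ℝ) < S.card := by exact_mod_cast hS.card_pos
  have hfS0 : 0 ≤ f (mask S τ) := hf_nonneg _ (mask_nonneg _ hτ)
  -- find a coordinate carrying at least the average
  have hsum : f (mask S τ) ≤ ∑ i ∈ S, f (mask {i} τ) :=
    f_mask_le_sum f hf_subadd hτ S hS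
  have havg : ∃ i ∈ S, f (mask S τ) / S.card ≤ f (mask {i} τ) := by
    apply Finset.exists_le_of_sum_le hS
    rw [Finset.sum_const, nsmul_eq_mul, mul_div_cancel₀ _ (ne_of_gt hcard)]
    exact hsum
  obtain ⟨i, hiS, hi⟩ := havg
  set A : Set Ωs := {ω | τ i < Z i ω} with hA
  have hAmeas : MeasurableSet A := measurableSet_lt measurable_const (hZ_meas i)
  set c : ℝ := f (mask {i} τ) with hc
  have hc0 : 0 ≤ c := hf_nonneg _ (mask_nonneg _ hτ)
  -- pointwise bound
  have hpt : ∀ ω, A.indicator (fun _ => c) ω ≤ f (mask S (fun j => Z j ω)) := by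
    intro ω
    by_cases hω : ω ∈ A
    · rw [Set.indicator_of_mem hω]
      apply hf_mono _ _ (mask_nonneg _ hτ)
      intro j
      simp only [mask, Finset.mem_singleton]
      by_cases hj : j = i
      · subst hj
        simp only [if_pos rfl, if_pos hiS]
        exact le_of_lt hω
      · simp only [if_neg hj]
        split
        · exact hZ_nonneg _ _
        · exact le_rfl
    · rw [Set.indicator_of_notMem hω]
      exact hf_nonneg _ (mask_nonneg _ fun j => hZ_nonneg j ω)
  have hind_int : Integrable (A.indicator (fun _ => c)) μ :=
    (integrable_const c).indicator hAmeas
  have hmono_int : ∫ ω, A.indicator (fun _ => c) ω ∂μ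
      ≤ ∫ ω, f (mask S (fun j => Z j ω)) ∂μ :=
    integral_mono hind_int (hint S) hpt
  have hind_val : ∫ ω, A.indicator (fun _ => c) ω ∂μ = (μ A).toReal * c := by
    rw [integral_indicator_const c hAmeas]; simp [smul_eq_mul, Measure.real]
  calc (p / k) * f (mask S τ)
      ≤ p * (f (mask S τ) / S.card) := by
        rw [div_mul_eq_mul_div, mul_div_assoc]
        apply mul_le_mul_of_nonneg_left _ hp.le
        apply div_le_div_of_nonneg_left hfS0 hcard
        exact_mod_cast hSk
    _ ≤ p * c := mul_le_mul_of_nonneg_left hi hp.le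
    _ ≤ (μ A).toReal * c := mul_le_mul_of_nonneg_right (hZp i) hc0
    _ = ∫ ω, A.indicator (fun _ => c) ω ∂μ := hind_val.symm
    _ ≤ _ := hmono_int
end
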